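/- In the field ℚ(x_1,x_2) of rational functions in two variables over ℚ, the following identity holds: (x_1 − x_2)·1/((1−x_1^3)^2(1−x_1^2x_2)^2(1−x_1x_2^2)^2(1−x_2^3)^2) = x_1·h(x_1, x_1x_2) − x_2·h(x_2, x_1x_2), where h(v_1,v_2) = p(v_1,v_2)/((1−v_1^3)^2(1−v_1v_2)^2(1−v_2^3)^2(1−v_2^6)^3) and p(v_1,v_2) = (1−v_2^3+v_2^6)((1+v_1^6v_2^3)(1+v_2^6) − 2v_1^3v_2^3(1+v_2^3)) − v_1v_2(1−v_2^3)(2(1−v_2^3−v_2^9) − v_1v_2(4−v_2^3−v_2^9) − v_1^3(1+v_2^6−4v_2^9) + 2v_1^4v_2(1+v_2^6−v_2^9)). (This expresses that h is the multiplicity series M' of the Hilbert series of the symmetric algebra K[W(3)⊕W(3)] of the GL_2-module W(3)⊕W(3).) -/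
import Mathlib

/-- The numerator polynomial `p(v₁,v₂)` of the multiplicity series of
`H(K[W(3)⊕W(3)])`. -/
noncomputable def numerW3W3 (v1 v2 : FractionRing (MvPolynomial (Fin 2) ℚ)) :
    FractionRing (MvPolynomial (Fin 2) ℚ) :=
  (1 - v2 ^ 3 + v2 ^ 6) *
      ((1 + v1 ^ 6 * v2 ^ 3) * (1 + v2 ^ 6) - 2 * v1 ^ 3 * v2 ^ 3 * (1 + v2 ^ 3)) -
    v1 * v2 * (1 - v2 ^ 3) *
      (2 * (1 - v2 ^ 3 - v2 ^ 9) - v1 * v2 * (4 - v2 ^ 3 - v2 ^ 9) -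
        v1 ^ 3 * (1 + v2 ^ 6 - 4 * v2 ^ 9) + 2 * v1 ^ 4 * v2 * (1 + v2 ^ 6 - v2 ^ 9))

/-- The candidate multiplicity series `M'(H(K[W(3)⊕W(3)]); v₁, v₂)`. -/
noncomputable def multSeriesW3W3 (v1 v2 : FractionRing (MvPolynomial (Fin 2) ℚ)) :
    FractionRing (MvPolynomial (Fin 2) ℚ) :=
  numerW3W3 v1 v2 /
    ((1 - v1 ^ 3) ^ 2 * (1 - v1 * v2) ^ 2 * (1 - v2 ^ 3) ^ 2 * (1 - v2 ^ 6) ^ 3)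

lemma poly_ne_aux (q : MvPolynomial (Fin 2) ℚ)
    (hq : MvPolynomial.constantCoeff q = 0) :
    (1 : MvPolynomial (Fin 2) ℚ) - q ≠ 0 := by
  intro hc
  have := congrArg MvPolynomial.constantCoeff hc
  simp [hq] at this

lemma alg_ne (q : MvPolynomial (Fin 2) ℚ) (h : q ≠ 0) :
    algebraMap (MvPolynomial (Fin 2) ℚ) (FractionRing (MvPolynomial (Fin 2) ℚ)) q ≠ 0 :=
  (IsFractionRing.to_map_eq_zero_iff
    (K := FractionRing (MvPolynomial (Fin 2) ℚ))).not.mpr h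

set_option maxHeartbeats 4000000 in
/-- In `ℚ(x₁,x₂)` one has
`(x₁ − x₂)/((1−x₁³)²(1−x₁²x₂)²(1−x₁x₂²)²(1−x₂³)²) = x₁·h(x₁,x₁x₂) − x₂·h(x₂,x₁x₂)`
where `h = multSeriesW3W3` is the multiplicity series of the Hilbert series of
the symmetric algebra `K[W(3)⊕W(3)]`. -/
theorem multiplicity_series_KW3W3
    (x1 x2 : FractionRing (MvPolynomial (Fin 2) ℚ))
    (hx1 : x1 = algebraMap (MvPolynomial (Fin 2) ℚ) _ (MvPolynomial.X 0))
    (hx2 : x2 = algebraMap (MvPolynomial (Fin 2) ℚ) _ (MvPolynomial.X 1)) :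
    (x1 - x2) *
        (1 / ((1 - x1 ^ 3) ^ 2 * (1 - x1 ^ 2 * x2) ^ 2 * (1 - x1 * x2 ^ 2) ^ 2 *
          (1 - x2 ^ 3) ^ 2)) =
      x1 * multSeriesW3W3 x1 (x1 * x2) - x2 * multSeriesW3W3 x2 (x1 * x2) := by
  set A := algebraMap (MvPolynomial (Fin 2) ℚ) (FractionRing (MvPolynomial (Fin 2) ℚ)) with hA
  have h1 : (1 - x1 ^ 3) ≠ 0 := by
    rw [hx1, ← map_pow, ← map_one A, ← map_sub]
    exact alg_ne _ (poly_ne_aux _ (by simp))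
  have h2 : (1 - x2 ^ 3) ≠ 0 := by
    rw [hx2, ← map_pow, ← map_one A, ← map_sub]
    exact alg_ne _ (poly_ne_aux _ (by simp))
  have h3 : (1 - x1 ^ 2 * x2) ≠ 0 := by
    rw [hx1, hx2, ← map_pow, ← map_mul, ← map_one A, ← map_sub]
    exact alg_ne _ (poly_ne_aux _ (by simp))
  have h4 : (1 - x1 * x2 ^ 2) ≠ 0 := by
    rw [hx1, hx2, ← map_pow, ← map_mul, ← map_one A, ← map_sub]
    exact alg_ne _ (poly_ne_aux _ (by simp))
  have h5 : (1 - (x1 * x2) ^ 3) ≠ 0 := by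
    rw [hx1, hx2, ← map_mul, ← map_pow, ← map_one A, ← map_sub]
    exact alg_ne _ (poly_ne_aux _ (by simp))
  have h6 : (1 - (x1 * x2) ^ 6) ≠ 0 := by
    rw [hx1, hx2, ← map_mul, ← map_pow, ← map_one A, ← map_sub]
    exact alg_ne _ (poly_ne_aux _ (by simp))
  have h1' : (1 - x1 * (x1 * x2)) ≠ 0 := by
    have e : 1 - x1 * (x1 * x2) = 1 - x1 ^ 2 * x2 := by ring
    rw [e]; exact h3
  have h2' : (1 - x2 * (x1 * x2)) ≠ 0 := by
    have e : 1 - x2 * (x1 * x2) = 1 - x1 * x2 ^ 2 := by ring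
    rw [e]; exact h4
  have hE1 : ((1 - x1 ^ 3) ^ 2 * (1 - x1 * (x1 * x2)) ^ 2 * (1 - (x1 * x2) ^ 3) ^ 2 *
      (1 - (x1 * x2) ^ 6) ^ 3) ≠ 0 :=
    mul_ne_zero (mul_ne_zero (mul_ne_zero (pow_ne_zero _ h1) (pow_ne_zero _ h1'))
      (pow_ne_zero _ h5)) (pow_ne_zero _ h6)
  have hE2 : ((1 - x2 ^ 3) ^ 2 * (1 - x2 * (x1 * x2)) ^ 2 * (1 - (x1 * x2) ^ 3) ^ 2 *
      (1 - (x1 * x2) ^ 6) ^ 3) ≠ 0 :=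
    mul_ne_zero (mul_ne_zero (mul_ne_zero (pow_ne_zero _ h2) (pow_ne_zero _ h2'))
      (pow_ne_zero _ h5)) (pow_ne_zero _ h6)
  have hD : ((1 - x1 ^ 3) ^ 2 * (1 - x1 ^ 2 * x2) ^ 2 * (1 - x1 * x2 ^ 2) ^ 2 *
      (1 - x2 ^ 3) ^ 2) ≠ 0 :=
    mul_ne_zero (mul_ne_zero (mul_ne_zero (pow_ne_zero _ h1) (pow_ne_zero _ h3))
      (pow_ne_zero _ h4)) (pow_ne_zero _ h2)
  rw [multSeriesW3W3, multSeriesW3W3, numerW3W3, numerW3W3, mul_one_div,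
    ← mul_div_assoc, ← mul_div_assoc, div_sub_div _ _ hE1 hE2,
    div_eq_div_iff hD (mul_ne_zero hE1 hE2)]
  ring
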